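/- With h, H, h₀ as in the context, set (h₀²) t i j := ∑ₖ ⟪h₀ t i k, h₀ t k j⟫, E t := ∑_{i,j} ((h₀²) t i j)², and F t r s := 2·∑_b ((h₀²) t r b)·(h₀ t s b) + 2·∑_b ((h₀²) t s b)·(h₀ t r b) − (if r = s then ∑_{i,j} ((h₀²) t i j)·(h₀ t i j) else 0). Then for every t: ∑_{r,s} ⟪h₀ t r s, (d/dt)(F t r s)⟫ = 3·(d/dt)(E t), where d/dt denotes the derivative in t. -/

import Mathlib

open scoped RealInnerProductSpace

lemma key_alg {V : Type*} [NormedAddCommGroup V] [InnerProductSpace ℝ V]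
    (a b : Fin 4 → Fin 4 → V)
    (ha : ∀ i j, a i j = a j i) (hb : ∀ i j, b i j = b j i)
    (htr : ∑ i : Fin 4, a i i = 0)
    (q p : Fin 4 → Fin 4 → ℝ)
    (hq : ∀ i j, q i j = ∑ k : Fin 4, ⟪a i k, a k j⟫)
    (hp : ∀ i j, p i j = ∑ k : Fin 4, (⟪a i k, b k j⟫ + ⟪b i k, a k j⟫)) :
    ∑ r : Fin 4, ∑ s : Fin 4,
      ⟪a r s,
        ((2:ℝ) • (∑ c : Fin 4, (q r c • b s c + p r c • a s c))
          + (2:ℝ) • (∑ c : Fin 4, (q s c • b r c + p s c • a r c))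
          - (if r = s then ∑ i : Fin 4, ∑ j : Fin 4, (q i j • b i j + p i j • a i j) else 0))⟫
      = 3 * ∑ i : Fin 4, ∑ j : Fin 4, (2 * q i j * p i j) := by
  have hqs : ∀ i j, q i j = q j i := by
    intro i j
    rw [hq, hq]
    refine Finset.sum_congr rfl fun k _ => ?_
    rw [ha i k, ha k j, real_inner_comm]
  set C := ∑ i : Fin 4, ∑ j : Fin 4, (q i j • b i j + p i j • a i j) with hC
  have hpt : ∀ r s : Fin 4,
      ⟪a r s,
        ((2:ℝ) • (∑ c : Fin 4, (q r c • b s c + p r c • a s c))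
          + (2:ℝ) • (∑ c : Fin 4, (q s c • b r c + p s c • a r c))
          - (if r = s then C else 0))⟫
      = (∑ c : Fin 4, (2 * (q r c * ⟪a r s, b s c⟫) + 2 * (p r c * ⟪a r s, a s c⟫)
          + 2 * (q s c * ⟪a r s, b r c⟫) + 2 * (p s c * ⟪a r s, a r c⟫)))
        - (if r = s then ⟪a r s, C⟫ else 0) := by
    intro r s
    have hite : ⟪a r s, (if r = s then C else 0)⟫ = (if r = s then ⟪a r s, C⟫ else 0) := by
      split <;> simp
    rw [inner_sub_right, hite, inner_add_right, real_inner_smul_right, real_inner_smul_right,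
      inner_sum, inner_sum, Finset.mul_sum, Finset.mul_sum, ← Finset.sum_add_distrib]
    congr 1
    refine Finset.sum_congr rfl fun c _ => ?_
    simp only [inner_add_right, real_inner_smul_right]
    ring
  simp only [hpt]
  have hdelta : ∑ r : Fin 4, ∑ s : Fin 4, (if r = s then ⟪a r s, C⟫ else 0) = 0 := by
    simp only [Finset.sum_ite_eq, Finset.mem_univ, if_true]
    rw [← sum_inner, htr, inner_zero_left]
  simp only [Finset.sum_sub_distrib]
  rw [hdelta, sub_zero]
  simp only [Finset.sum_add_distrib]
  simp only [← Finset.mul_sum]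
  have hS1 : (∑ r : Fin 4, ∑ s : Fin 4, ∑ c : Fin 4, q r c * ⟪a r s, b s c⟫)
      = ∑ i : Fin 4, ∑ j : Fin 4, ∑ k : Fin 4, q i j * ⟪a i k, b k j⟫ :=
    Finset.sum_congr rfl fun r _ => Finset.sum_comm
  have hS2 : (∑ r : Fin 4, ∑ s : Fin 4, ∑ c : Fin 4, p r c * ⟪a r s, a s c⟫)
      = ∑ i : Fin 4, ∑ j : Fin 4, q i j * p i j := by
    refine Finset.sum_congr rfl fun r _ => ?_
    rw [Finset.sum_comm]
    refine Finset.sum_congr rfl fun c _ => ?_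
    rw [← Finset.mul_sum, ← hq, mul_comm]
  have hS3 : (∑ r : Fin 4, ∑ s : Fin 4, ∑ c : Fin 4, q s c * ⟪a r s, b r c⟫)
      = ∑ i : Fin 4, ∑ j : Fin 4, ∑ k : Fin 4, q i j * ⟪a i k, b k j⟫ := by
    rw [Finset.sum_comm]
    refine Finset.sum_congr rfl fun s _ => ?_
    rw [Finset.sum_comm]
    refine Finset.sum_congr rfl fun c _ => Finset.sum_congr rfl fun r _ => ?_
    rw [ha r s]
  have hS4 : (∑ r : Fin 4, ∑ s : Fin 4, ∑ c : Fin 4, p s c * ⟪a r s, a r c⟫)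
      = ∑ i : Fin 4, ∑ j : Fin 4, q i j * p i j := by
    rw [Finset.sum_comm]
    refine Finset.sum_congr rfl fun s _ => ?_
    rw [Finset.sum_comm]
    refine Finset.sum_congr rfl fun c _ => ?_
    rw [← Finset.mul_sum,
      show (∑ r : Fin 4, ⟪a r s, a r c⟫) = q s c from by
        rw [hq]; exact Finset.sum_congr rfl fun r _ => by rw [ha r s],
      mul_comm]
  have hT : (∑ i : Fin 4, ∑ j : Fin 4, q i j * p i j)
      = 2 * ∑ i : Fin 4, ∑ j : Fin 4, ∑ k : Fin 4, q i j * ⟪a i k, b k j⟫ := by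
    have e1 : (∑ i : Fin 4, ∑ j : Fin 4, q i j * p i j)
        = (∑ i : Fin 4, ∑ j : Fin 4, ∑ k : Fin 4, q i j * ⟪a i k, b k j⟫)
          + ∑ i : Fin 4, ∑ j : Fin 4, ∑ k : Fin 4, q i j * ⟪b i k, a k j⟫ := by
      simp only [hp, Finset.mul_sum, mul_add, Finset.sum_add_distrib]
    have key : ∀ x y k : Fin 4, q x y * ⟪b x k, a k y⟫ = q y x * ⟪a y k, b k x⟫ := by
      intro x y k
      rw [hqs x y, real_inner_comm, ha k y, hb x k]
    have e2 : (∑ i : Fin 4, ∑ j : Fin 4, ∑ k : Fin 4, q i j * ⟪b i k, a k j⟫)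
        = ∑ i : Fin 4, ∑ j : Fin 4, ∑ k : Fin 4, q i j * ⟪a i k, b k j⟫ := by
      rw [Finset.sum_comm]
      exact Finset.sum_congr rfl fun j _ => Finset.sum_congr rfl fun i _ =>
        Finset.sum_congr rfl fun k _ => key i j k
    rw [e1, e2, two_mul]
  have hR : (∑ i : Fin 4, ∑ j : Fin 4, 2 * q i j * p i j)
      = 2 * ∑ i : Fin 4, ∑ j : Fin 4, q i j * p i j := by
    simp only [Finset.mul_sum, mul_assoc]
  rw [hS1, hS2, hS3, hS4, hR]
  linarith [hT]



/-- For the energy density `E t = |h₀²|²` with flux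
`F t r s = 2∑_b (h₀²)_{rb}·h₀ t s b + 2∑_b (h₀²)_{sb}·h₀ t r b − δ_{rs}·⟨h₀², h₀⟩`,
one has `∑_{r,s} ⟪h₀ t r s, ∂ₜ F t r s⟫ = 3 ∂ₜ E t`. -/
theorem stmt_17 {V : Type*} [NormedAddCommGroup V] [InnerProductSpace ℝ V]
    (h : ℝ → Fin 4 → Fin 4 → V)
    (hdiff : ∀ i j, Differentiable ℝ (fun t => h t i j))
    (hsymm : ∀ t i j, h t i j = h t j i)
    (H : ℝ → V) (hH : ∀ t, H t = (1 / 4 : ℝ) • ∑ i : Fin 4, h t i i)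
    (h₀ : ℝ → Fin 4 → Fin 4 → V)
    (hh₀ : ∀ t i j, h₀ t i j = h t i j - if i = j then H t else 0)
    (h₀2 : ℝ → Fin 4 → Fin 4 → ℝ)
    (hh₀2 : ∀ t i j, h₀2 t i j = ∑ k : Fin 4, ⟪h₀ t i k, h₀ t k j⟫)
    (E : ℝ → ℝ)
    (hE : ∀ t, E t = ∑ i : Fin 4, ∑ j : Fin 4, h₀2 t i j ^ 2)
    (F : ℝ → Fin 4 → Fin 4 → V)
    (hF : ∀ t r s, F t r s
      = (2 : ℝ) • (∑ b : Fin 4, h₀2 t r b • h₀ t s b)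
        + (2 : ℝ) • (∑ b : Fin 4, h₀2 t s b • h₀ t r b)
        - (if r = s then ∑ i : Fin 4, ∑ j : Fin 4, h₀2 t i j • h₀ t i j else 0)) :
    ∀ t, ∑ r : Fin 4, ∑ s : Fin 4, ⟪h₀ t r s, deriv (fun u => F u r s) t⟫
      = 3 * deriv E t := by
  intro t
  -- derivatives of h
  have hhd : ∀ i j, HasDerivAt (fun u => h u i j) (deriv (fun u => h u i j) t) t :=
    fun i j => ((hdiff i j) t).hasDerivAt
  -- derivative of H
  have hHd : HasDerivAt H ((1 / 4 : ℝ) • ∑ i : Fin 4, deriv (fun u => h u i i) t) t := by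
    have hHe : H = fun u => (1 / 4 : ℝ) • ∑ i : Fin 4, h u i i := funext hH
    rw [hHe]
    exact (HasDerivAt.fun_sum fun i _ => hhd i i).fun_const_smul _
  -- derivative of h₀
  have hbd0 : ∀ i j, HasDerivAt (fun u => h₀ u i j)
      ((deriv (fun u => h u i j) t)
        - (if i = j then (1 / 4 : ℝ) • ∑ i : Fin 4, deriv (fun u => h u i i) t else 0)) t := by
    intro i j
    have he : (fun u => h₀ u i j) = fun u => h u i j - (if i = j then H u else 0) :=
      funext fun u => hh₀ u i j
    rw [he]
    by_cases hij : i = j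
    · simpa only [if_pos hij] using (hhd i j).fun_sub hHd
    · simpa only [if_neg hij, sub_zero] using (hhd i j).sub_const 0
  set b : Fin 4 → Fin 4 → V := fun i j => deriv (fun u => h₀ u i j) t with hbdef
  have hbd : ∀ i j, HasDerivAt (fun u => h₀ u i j) (b i j) t := by
    intro i j
    have := (hbd0 i j).deriv
    simp only [hbdef]
    rw [this]
    exact hbd0 i j
  -- derivative of h₀2
  set p : Fin 4 → Fin 4 → ℝ :=
    fun i j => ∑ k : Fin 4, (⟪h₀ t i k, b k j⟫ + ⟪b i k, h₀ t k j⟫) with hpdef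
  have hqd : ∀ i j, HasDerivAt (fun u => h₀2 u i j) (p i j) t := by
    intro i j
    have he : (fun u => h₀2 u i j) = fun u => ∑ k : Fin 4, ⟪h₀ u i k, h₀ u k j⟫ :=
      funext fun u => hh₀2 u i j
    rw [he]
    exact HasDerivAt.fun_sum fun k _ => (hbd i k).inner ℝ (hbd k j)
  -- derivative of E
  have hEd : HasDerivAt E (∑ i : Fin 4, ∑ j : Fin 4, (2 * h₀2 t i j * p i j)) t := by
    have he : E = fun u => ∑ i : Fin 4, ∑ j : Fin 4, h₀2 u i j ^ 2 := funext hE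
    rw [he]
    exact HasDerivAt.fun_sum fun i _ => HasDerivAt.fun_sum fun j _ => by
      simpa using (hqd i j).fun_pow 2
  -- derivative of F
  have hFd : ∀ r s, HasDerivAt (fun u => F u r s)
      ((2:ℝ) • (∑ c : Fin 4, (h₀2 t r c • b s c + p r c • h₀ t s c))
        + (2:ℝ) • (∑ c : Fin 4, (h₀2 t s c • b r c + p s c • h₀ t r c))
        - (if r = s then ∑ i : Fin 4, ∑ j : Fin 4, (h₀2 t i j • b i j + p i j • h₀ t i j)
            else 0)) t := by
    intro r s
    have he : (fun u => F u r s) = fun u =>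
        (2 : ℝ) • (∑ c : Fin 4, h₀2 u r c • h₀ u s c)
          + (2 : ℝ) • (∑ c : Fin 4, h₀2 u s c • h₀ u r c)
          - (if r = s then ∑ i : Fin 4, ∑ j : Fin 4, h₀2 u i j • h₀ u i j else 0) :=
      funext fun u => hF u r s
    rw [he]
    have h1 : HasDerivAt (fun u => (2 : ℝ) • (∑ c : Fin 4, h₀2 u r c • h₀ u s c))
        ((2:ℝ) • (∑ c : Fin 4, (h₀2 t r c • b s c + p r c • h₀ t s c))) t :=
      (HasDerivAt.fun_sum fun c _ => (hqd r c).fun_smul (hbd s c)).fun_const_smul _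
    have h2 : HasDerivAt (fun u => (2 : ℝ) • (∑ c : Fin 4, h₀2 u s c • h₀ u r c))
        ((2:ℝ) • (∑ c : Fin 4, (h₀2 t s c • b r c + p s c • h₀ t r c))) t :=
      (HasDerivAt.fun_sum fun c _ => (hqd s c).fun_smul (hbd r c)).fun_const_smul _
    by_cases hrs : r = s
    · simp only [if_pos hrs]
      exact (h1.fun_add h2).fun_sub
        (HasDerivAt.fun_sum fun i _ => HasDerivAt.fun_sum fun j _ => (hqd i j).fun_smul (hbd i j))
    · simpa only [if_neg hrs, sub_zero] using (h1.fun_add h2).sub_const 0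
  -- symmetry and trace facts
  have has : ∀ i j, h₀ t i j = h₀ t j i := by
    intro i j
    rw [hh₀, hh₀, hsymm t i j]
    congr 1
    simp [eq_comm]
  have hbs : ∀ i j, b i j = b j i := by
    intro i j
    simp only [hbdef]
    congr 1
    funext u
    rw [hh₀, hh₀, hsymm u i j]
    congr 1
    simp [eq_comm]
  have htr : ∑ i : Fin 4, h₀ t i i = 0 := by
    have hdiag : ∀ i : Fin 4, h₀ t i i = h t i i - H t := fun i => by rw [hh₀]; simp
    simp only [hdiag, hH t, Fin.sum_univ_four]
    module
  -- put it together
  simp only [fun r s => (hFd r s).deriv, hEd.deriv]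
  exact key_alg (h₀ t) b has hbs htr (h₀2 t) p (hh₀2 t) (fun i j => rfl)
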